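/- For a partition λ of n, the modified Kostka polynomial K_λ(q) := (1-q)(1-q²)⋯(1-qⁿ) / ∏_{u∈λ}(1-q^{h_λ(u)}) (where h_λ(u) is the hook length of the box u in the Young diagram of λ) is a polynomial in q with integer coefficients and constant term equal to 1. -/

import Mathlib

/-- The hook length of the box `c` in the Young diagram `μ`. -/
def hookLength (μ : YoungDiagram) (c : ℕ × ℕ) : ℕ :=
  (μ.rowLen c.1 - c.2) + (μ.colLen c.2 - c.1) - 1

section Aux

/-- number of pairs b ∈ B, c < b, c ∉ B, d ∣ b-c -/
def invd (d : ℕ) (B : Finset ℕ) : ℕ :=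
  ∑ b ∈ B, ((Finset.range b).filter (fun c => c ∉ B ∧ d ∣ b - c)).card

def TTd (d : ℕ) (B : Finset ℕ) : ℕ :=
  ∑ b ∈ B, (B.filter (fun c => c < b ∧ d ∣ b - c)).card

def Ud (d : ℕ) (B : Finset ℕ) : ℕ :=
  ((B ×ˢ B).filter (fun p => p.1 ≠ p.2 ∧ p.1 % d = p.2 % d)).card

lemma count_range_dvd (d N : ℕ) (hd : 0 < d) :
    ((Finset.range N).filter (fun x => d ∣ (x + 1))).card = N / d := by
  induction N with
  | zero => simp
  | succ N ih =>
      rw [Finset.range_add_one, Finset.filter_insert]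
      rw [Nat.succ_div]
      by_cases h : d ∣ N + 1
      · rw [if_pos h, if_pos h, Finset.card_insert_of_notMem (by simp), ih]
      · rw [if_neg h, if_neg h, ih, add_zero]

lemma count_range_sub_dvd (d b : ℕ) (hd : 0 < d) :
    ((Finset.range b).filter (fun c => d ∣ b - c)).card = b / d := by
  rw [← count_range_dvd d b hd]
  apply Finset.card_nbij' (fun c => b - 1 - c) (fun x => b - 1 - x)
  · intro c hc
    simp only [Finset.mem_coe, Finset.mem_filter, Finset.mem_range] at hc ⊢
    have : b - 1 - c + 1 = b - c := by omega
    refine ⟨by omega, by rw [this]; exact hc.2⟩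
  · intro x hx
    simp only [Finset.mem_coe, Finset.mem_filter, Finset.mem_range] at hx ⊢
    have : b - (b - 1 - x) = x + 1 := by omega
    refine ⟨by omega, by rw [this]; exact hx.2⟩
  · intro c hc; simp only [Finset.mem_coe, Finset.mem_filter, Finset.mem_range] at hc; dsimp only; omega
  · intro x hx; simp only [Finset.mem_coe, Finset.mem_filter, Finset.mem_range] at hx; dsimp only; omega

lemma invd_add_TTd (d : ℕ) (hd : 0 < d) (B : Finset ℕ) :
    invd d B + TTd d B = ∑ b ∈ B, b / d := by
  rw [invd, TTd, ← Finset.sum_add_distrib]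
  refine Finset.sum_congr rfl fun b _hb => ?_
  have e1 : (Finset.range b).filter (fun c => c ∉ B ∧ d ∣ b - c)
      = ((Finset.range b).filter (fun c => d ∣ b - c)).filter (fun c => ¬ (c ∈ B)) := by
    rw [Finset.filter_filter]; apply Finset.filter_congr; intro c _; tauto
  have e2 : B.filter (fun c => c < b ∧ d ∣ b - c)
      = ((Finset.range b).filter (fun c => d ∣ b - c)).filter (fun c => c ∈ B) := by
    ext c
    simp only [Finset.mem_filter, Finset.mem_range]
    tauto
  rw [e1, e2, add_comm, Finset.card_filter_add_card_filter_not,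
    count_range_sub_dvd d b hd]

def Ud2 (d : ℕ) (B : Finset ℕ) : ℕ :=
  ∑ b ∈ B, (B.filter (fun c => c ≠ b ∧ c % d = b % d)).card

lemma two_TTd (d : ℕ) (hd : 0 < d) (B : Finset ℕ) : 2 * TTd d B = Ud2 d B := by
  have hcf : ∀ (p : ℕ → Prop) [DecidablePred p],
      (B.filter p).card = ∑ c ∈ B, if p c then 1 else 0 := by
    intro p _; rw [Finset.card_filter]
  have swap : TTd d B = ∑ b ∈ B, ∑ c ∈ B, (if b < c ∧ d ∣ c - b then 1 else 0) := by
    rw [TTd]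
    simp_rw [hcf]
    rw [Finset.sum_comm]
  rw [two_mul]
  nth_rewrite 2 [swap]
  rw [TTd, Ud2]
  simp_rw [hcf]
  rw [← Finset.sum_add_distrib]
  refine Finset.sum_congr rfl fun b _ => ?_
  rw [← Finset.sum_add_distrib]
  refine Finset.sum_congr rfl fun c _ => ?_
  have h1 : c ≤ b → (c % d = b % d ↔ d ∣ b - c) := fun h => Nat.modEq_iff_dvd' h
  have h2 : b ≤ c → (b % d = c % d ↔ d ∣ c - b) := fun h => Nat.modEq_iff_dvd' h
  rcases lt_trichotomy c b with h | h | h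
  · by_cases hdvd : d ∣ b - c
    · rw [if_pos ⟨h, hdvd⟩, if_neg (by omega), if_pos ⟨by omega, (Nat.modEq_iff_dvd' h.le).mpr hdvd⟩]
    · rw [if_neg (by tauto), if_neg (by omega), if_neg]
      rintro ⟨-, hm⟩; exact hdvd ((Nat.modEq_iff_dvd' h.le).mp hm)
  · subst h; simp
  · by_cases hdvd : d ∣ c - b
    · rw [if_neg (by omega), if_pos ⟨h, hdvd⟩, if_pos ⟨by omega, ((Nat.modEq_iff_dvd' h.le).mpr hdvd).symm⟩]
    · rw [if_neg (by omega), if_neg (by tauto), if_neg]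
      rintro ⟨-, hm⟩; exact hdvd ((Nat.modEq_iff_dvd' h.le).mp hm.symm)

lemma Ud2_image (d : ℕ) (B : Finset ℕ) (f : ℕ → ℕ) (hinj : Set.InjOn f B)
    (hres : ∀ x ∈ B, f x % d = x % d) : Ud2 d (B.image f) = Ud2 d B := by
  rw [Ud2, Finset.sum_image (fun x hx y hy h => hinj hx hy h), Ud2]
  refine Finset.sum_congr rfl fun b hb => ?_
  symm
  apply Finset.card_nbij f
  · intro c hc
    simp only [Finset.mem_coe, Finset.mem_filter] at hc ⊢
    obtain ⟨hcB, hne, hm⟩ := hc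
    exact ⟨Finset.mem_image_of_mem f hcB,
      fun h => hne (hinj hcB hb h),
      by rw [hres c hcB, hres b hb]; exact hm⟩
  · intro x hx y hy h
    simp only [Finset.coe_filter, Set.mem_setOf_eq] at hx hy
    exact hinj hx.1 hy.1 h
  · intro y hy
    simp only [Finset.coe_filter, Set.mem_setOf_eq, Finset.mem_image] at hy
    obtain ⟨⟨c, hcB, rfl⟩, hne, hm⟩ := hy
    refine ⟨c, ?_, rfl⟩
    simp only [Finset.coe_filter, Set.mem_setOf_eq]
    refine ⟨hcB, fun h => hne (by rw [h]), ?_⟩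
    rw [hres c hcB, hres b hb] at hm
    exact hm

lemma Ud2_one (B : Finset ℕ) : Ud2 1 B = B.card * (B.card - 1) := by
  rw [Ud2]
  have : ∀ b ∈ B, (B.filter (fun c => c ≠ b ∧ c % 1 = b % 1)).card = B.card - 1 := by
    intro b hb
    rw [show (B.filter (fun c => c ≠ b ∧ c % 1 = b % 1)) = B.erase b by
      ext c; simp [Finset.mem_erase, Nat.mod_one, and_comm]]
    exact Finset.card_erase_of_mem hb
  rw [Finset.sum_congr rfl this, Finset.sum_const, smul_eq_mul]

/-- The slide step -/
lemma slide (d : ℕ) (hd : 0 < d) (B : Finset ℕ) (p : ℕ) (hp : p ∈ B) (hdp : d ≤ p)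
    (hpd : p - d ∉ B) :
    let B' := insert (p - d) (B.erase p)
    B'.card = B.card ∧ (∑ b ∈ B', b) + d = ∑ b ∈ B, b ∧
    (invd d B' + 1 = invd d B) ∧ (invd 1 B' + d = invd 1 B) := by
  intro B'
  have hB' : B' = B.image (fun x => if x = p then p - d else x) := by
    ext y
    simp only [B', Finset.mem_insert, Finset.mem_erase, Finset.mem_image]
    constructor
    · rintro (rfl | ⟨hne, hy⟩)
      · exact ⟨p, hp, by simp⟩
      · exact ⟨y, hy, by simp [hne]⟩
    · rintro ⟨x, hx, rfl⟩
      by_cases h : x = p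
      · simp [h]
      · simp [h, hx]
  have hinj : Set.InjOn (fun x => if x = p then p - d else x) B := by
    intro x hx y hy h
    simp only at h
    split_ifs at h with h1 h2 h3
    · omega
    · exfalso; exact hpd (h ▸ hy)
    · exfalso; exact hpd (h ▸ hx)
    · exact h
  have hcard : B'.card = B.card := by
    rw [hB', Finset.card_image_of_injOn hinj]
  have hsum : (∑ b ∈ B', b) + d = ∑ b ∈ B, b := by
    have h1 : ∑ b ∈ B', b = (p - d) + ∑ b ∈ B.erase p, b := by
      rw [Finset.sum_insert (fun h => hpd (Finset.mem_of_mem_erase h))]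
    have h2 : p + ∑ b ∈ B.erase p, b = ∑ b ∈ B, b := Finset.add_sum_erase B (fun b => b) hp
    omega
  have hUd : ∀ e : ℕ, 0 < e → e ∣ d → Ud2 e B' = Ud2 e B := by
    intro e he hed
    rw [hB']
    apply Ud2_image e B _ hinj
    intro x hx
    show (if x = p then p - d else x) % e = x % e
    split_ifs with h
    · subst h
      obtain ⟨t, rfl⟩ := hed
      have hle : t * e ≤ x := by rw [mul_comm]; exact hdp
      rw [show x - e * t = x - t * e by rw [mul_comm]]
      conv_rhs => rw [show x = (x - t * e) + t * e by omega]
      rw [Nat.add_mul_mod_self_right]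
    · rfl
  have hsumdiv : ∀ e : ℕ, 0 < e → e ∣ d → (∑ b ∈ B', b / e) + d / e = ∑ b ∈ B, b / e := by
    intro e he hed
    have h1 : ∑ b ∈ B', b / e = (p - d) / e + ∑ b ∈ B.erase p, b / e := by
      rw [Finset.sum_insert (fun h => hpd (Finset.mem_of_mem_erase h))]
    have h2 : p / e + ∑ b ∈ B.erase p, b / e = ∑ b ∈ B, b / e := Finset.add_sum_erase B (fun b => b / e) hp
    have h3 : (p - d) / e + d / e = p / e := by
      obtain ⟨t, rfl⟩ := hed
      have : p - e * t + e * t = p := by omega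
      calc (p - e * t) / e + (e * t) / e = (p - e * t) / e + t := by
            rw [Nat.mul_div_cancel_left t he]
        _ = (p - e * t + e * t) / e := by
            rw [Nat.add_mul_div_left _ _ he]
        _ = p / e := by rw [this]
    omega
  have key : ∀ e : ℕ, 0 < e → e ∣ d → invd e B' + d / e = invd e B := by
    intro e he hed
    have t1 := invd_add_TTd e he B'
    have t2 := invd_add_TTd e he B
    have t3 := two_TTd e he B'
    have t4 := two_TTd e he B
    have t5 := hUd e he hed
    have t6 := hsumdiv e he hed
    omega
  refine ⟨hcard, hsum, ?_, ?_⟩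
  · have := key d hd dvd_rfl
    rwa [Nat.div_self hd] at this
  · have := key 1 one_pos (one_dvd d)
    rwa [Nat.div_one] at this

lemma invd_le (d : ℕ) (hd : 0 < d) (B : Finset ℕ) : d * invd d B ≤ invd 1 B := by
  generalize hs : (∑ b ∈ B, b) = s
  induction s using Nat.strong_induction_on generalizing B with
  | _ s ih =>
    by_cases h : ∃ p ∈ B, d ≤ p ∧ p - d ∉ B
    · obtain ⟨p, hp, hdp, hpd⟩ := h
      obtain ⟨-, hsum, h1, h2⟩ := slide d hd B p hp hdp hpd
      set B' := insert (p - d) (B.erase p) with hB'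
      have hlt : (∑ b ∈ B', b) < s := by omega
      have hih := ih _ hlt B' rfl
      have hmul : d * invd d B = d * invd d B' + d := by rw [← h1]; ring
      omega
    · push_neg at h
      have hstep : ∀ p ∈ B, d ≤ p → p - d ∈ B := h
      have hzero : invd d B = 0 := by
        rw [invd]
        apply Finset.sum_eq_zero
        intro b hb
        rw [Finset.card_eq_zero, Finset.filter_eq_empty_iff]
        rintro c hc ⟨hcB, hdvd⟩
        rw [Finset.mem_range] at hc
        obtain ⟨t, ht⟩ := hdvd
        have ht' : b - c = t * d := by rw [mul_comm]; exact ht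
        have haux : ∀ m : ℕ, ∀ x ∈ B, m * d ≤ x → x - m * d ∈ B := by
          intro m
          induction m with
          | zero => intro x hx _; simpa using hx
          | succ m ihm =>
            intro x hx hmx
            rw [Nat.succ_mul] at hmx ⊢
            have h1 : x - m * d ∈ B := ihm x hx (by omega)
            have h2 : d ≤ x - m * d := by omega
            have h3 := hstep _ h1 h2
            rw [show x - m * d - d = x - (m * d + d) by omega] at h3
            exact h3
        have hcb : c = b - t * d := by omega
        have hmem : b - t * d ∈ B := haux t b hb (by omega)
        rw [← hcb] at hmem
        exact hcB hmem
      rw [hzero, mul_zero]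
      exact Nat.zero_le _

def beta (μ : YoungDiagram) (i : ℕ) : ℕ := μ.rowLen i + (μ.colLen 0 - 1 - i)

def bset (μ : YoungDiagram) : Finset ℕ := (Finset.range (μ.colLen 0)).image (beta μ)

lemma beta_strictanti (μ : YoungDiagram) {i i' : ℕ} (h : i < i') (h' : i' < μ.colLen 0) :
    beta μ i' < beta μ i := by
  have h1 : μ.rowLen i' ≤ μ.rowLen i := μ.rowLen_anti i i' h.le
  rw [beta, beta]
  omega

lemma beta_injOn (μ : YoungDiagram) :
    Set.InjOn (beta μ) (Finset.range (μ.colLen 0)) := by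
  intro x hx y hy hxy
  simp only [Finset.coe_range, Set.mem_Iio] at hx hy
  by_contra hne
  rcases lt_or_gt_of_ne hne with h | h
  · exact absurd hxy (beta_strictanti μ h hy).ne'
  · exact absurd hxy (beta_strictanti μ h hx).ne

lemma card_bset (μ : YoungDiagram) : (bset μ).card = μ.colLen 0 := by
  rw [bset, Finset.card_image_of_injOn (beta_injOn μ), Finset.card_range]

lemma card_eq_sum_rowLen (μ : YoungDiagram) :
    μ.card = ∑ i ∈ Finset.range (μ.colLen 0), μ.rowLen i := by
  rw [YoungDiagram.card]
  rw [Finset.card_eq_sum_card_fiberwise (f := Prod.fst) (t := Finset.range (μ.colLen 0))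
    (fun c hc => by
      rw [Finset.mem_coe, Finset.mem_range]
      rw [Finset.mem_coe, YoungDiagram.mem_cells, YoungDiagram.mem_iff_lt_colLen] at hc
      calc c.1 < μ.colLen c.2 := hc
        _ ≤ μ.colLen 0 := μ.colLen_anti 0 c.2 (Nat.zero_le _))]
  refine Finset.sum_congr rfl fun i _ => ?_
  rw [μ.rowLen_eq_card]
  congr 1

lemma sum_bset (μ : YoungDiagram) :
    2 * (∑ b ∈ bset μ, b) = 2 * μ.card + μ.colLen 0 * (μ.colLen 0 - 1) := by
  rw [bset, Finset.sum_image (fun x hx y hy h => beta_injOn μ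
    (by simpa using hx) (by simpa using hy) h)]
  rw [card_eq_sum_rowLen]
  set k := μ.colLen 0
  have h1 : ∑ i ∈ Finset.range k, beta μ i
      = (∑ i ∈ Finset.range k, μ.rowLen i) + ∑ i ∈ Finset.range k, (k - 1 - i) := by
    rw [← Finset.sum_add_distrib]
    exact Finset.sum_congr rfl fun i _ => rfl
  have h2 : ∑ i ∈ Finset.range k, (k - 1 - i) = ∑ i ∈ Finset.range k, i := by
    rw [← Finset.sum_range_reflect]
    refine Finset.sum_congr rfl fun i hi => ?_
    rw [Finset.mem_range] at hi
    omega
  have h3 : (∑ i ∈ Finset.range k, i) * 2 = k * (k - 1) := Finset.sum_range_id_mul_two k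
  rw [h1, h2]
  omega

lemma invd_one_bset (μ : YoungDiagram) : invd 1 (bset μ) = μ.card := by
  have t1 := invd_add_TTd 1 one_pos (bset μ)
  have t2 := two_TTd 1 one_pos (bset μ)
  have t3 := Ud2_one (bset μ)
  have t4 := sum_bset μ
  have t5 := card_bset μ
  rw [t5] at t3
  simp only [Nat.div_one] at t1
  omega

lemma hook_pos (μ : YoungDiagram) {i j : ℕ} (hc : (i, j) ∈ μ) : 0 < hookLength μ (i, j) := by
  have hj : j < μ.rowLen i := YoungDiagram.mem_iff_lt_rowLen.mp hc
  have hi : i < μ.colLen j := YoungDiagram.mem_iff_lt_colLen.mp hc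
  rw [hookLength]
  dsimp only
  omega

lemma cells_filter_le (μ : YoungDiagram) (d : ℕ) (hd : 0 < d) :
    (μ.cells.filter (fun c => d ∣ hookLength μ c)).card ≤ invd d (bset μ) := by
  rw [invd, ← Finset.card_sigma]
  apply Finset.card_le_card_of_injOn
    (fun c => ⟨beta μ c.1, beta μ c.1 - hookLength μ c⟩)
  · rintro ⟨i, j⟩ hc
    dsimp only
    rw [Finset.mem_coe, Finset.mem_filter, YoungDiagram.mem_cells] at hc
    obtain ⟨hmem, hdvd⟩ := hc
    have hj : j < μ.rowLen i := YoungDiagram.mem_iff_lt_rowLen.mp hmem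
    have hi : i < μ.colLen j := YoungDiagram.mem_iff_lt_colLen.mp hmem
    have hjk : μ.colLen j ≤ μ.colLen 0 := μ.colLen_anti 0 j (Nat.zero_le _)
    have hik : i < μ.colLen 0 := lt_of_lt_of_le hi hjk
    have hhook : hookLength μ (i, j) = (μ.rowLen i - j) + (μ.colLen j - i) - 1 := rfl
    have hbeta : beta μ i = μ.rowLen i + (μ.colLen 0 - 1 - i) := rfl
    have hle : hookLength μ (i, j) ≤ beta μ i := by omega
    have hpos : 0 < hookLength μ (i, j) := by omega
    refine Finset.mem_sigma.mpr ⟨?_, ?_⟩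
    · show beta μ i ∈ bset μ
      rw [bset, Finset.mem_image]
      exact ⟨i, Finset.mem_range.mpr hik, rfl⟩
    · show beta μ i - hookLength μ (i, j)
        ∈ (Finset.range (beta μ i)).filter (fun c => c ∉ bset μ ∧ d ∣ beta μ i - c)
      rw [Finset.mem_filter, Finset.mem_range]
      refine ⟨by omega, ?_, ?_⟩
      · -- beta μ i - hookLength μ (i,j) ∉ bset μ
        intro hmem'
        rw [bset, Finset.mem_image] at hmem'
        obtain ⟨i', hi'k, heq⟩ := hmem'
        rw [Finset.mem_range] at hi'k
        have hbeta' : beta μ i' = μ.rowLen i' + (μ.colLen 0 - 1 - i') := rfl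
        by_cases hcase : i' < μ.colLen j
        · have : j < μ.rowLen i' := YoungDiagram.mem_iff_lt_rowLen.mp
            (YoungDiagram.mem_iff_lt_colLen.mpr hcase)
          omega
        · have : ¬ j < μ.rowLen i' := fun h => hcase
            (YoungDiagram.mem_iff_lt_colLen.mp (YoungDiagram.mem_iff_lt_rowLen.mpr h))
          omega
      · rw [show beta μ i - (beta μ i - hookLength μ (i, j)) = hookLength μ (i, j) by omega]
        exact hdvd
  · rintro ⟨i1, j1⟩ h1 ⟨i2, j2⟩ h2 heq
    simp only [Finset.coe_filter, Set.mem_setOf_eq, YoungDiagram.mem_cells] at h1 h2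
    obtain ⟨hm1, -⟩ := h1
    obtain ⟨hm2, -⟩ := h2
    have hj1 : j1 < μ.rowLen i1 := YoungDiagram.mem_iff_lt_rowLen.mp hm1
    have hi1 : i1 < μ.colLen j1 := YoungDiagram.mem_iff_lt_colLen.mp hm1
    have hj2 : j2 < μ.rowLen i2 := YoungDiagram.mem_iff_lt_rowLen.mp hm2
    have hi2 : i2 < μ.colLen j2 := YoungDiagram.mem_iff_lt_colLen.mp hm2
    have hjk1 : μ.colLen j1 ≤ μ.colLen 0 := μ.colLen_anti 0 j1 (Nat.zero_le _)
    have hjk2 : μ.colLen j2 ≤ μ.colLen 0 := μ.colLen_anti 0 j2 (Nat.zero_le _)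
    have hik1 : i1 < μ.colLen 0 := lt_of_lt_of_le hi1 hjk1
    have hik2 : i2 < μ.colLen 0 := lt_of_lt_of_le hi2 hjk2
    simp only [Sigma.mk.inj_iff, heq_iff_eq] at heq
    obtain ⟨heq1, heq2⟩ := heq
    have hii : i1 = i2 := beta_injOn μ (by simpa using hik1) (by simpa using hik2) heq1
    subst hii
    have hle1 : hookLength μ (i1, j1) ≤ beta μ i1 := by
      have hh1 : hookLength μ (i1, j1) = (μ.rowLen i1 - j1) + (μ.colLen j1 - i1) - 1 := rfl
      have hbeta : beta μ i1 = μ.rowLen i1 + (μ.colLen 0 - 1 - i1) := rfl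
      omega
    have hle2 : hookLength μ (i1, j2) ≤ beta μ i1 := by
      have hh2 : hookLength μ (i1, j2) = (μ.rowLen i1 - j2) + (μ.colLen j2 - i1) - 1 := rfl
      have hbeta : beta μ i1 = μ.rowLen i1 + (μ.colLen 0 - 1 - i1) := rfl
      omega
    have hh1 : hookLength μ (i1, j1) = (μ.rowLen i1 - j1) + (μ.colLen j1 - i1) - 1 := rfl
    have hh2 : hookLength μ (i1, j2) = (μ.rowLen i1 - j2) + (μ.colLen j2 - i1) - 1 := rfl
    have hbeta : beta μ i1 = μ.rowLen i1 + (μ.colLen 0 - 1 - i1) := rfl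
    have hjj : j1 = j2 := by
      rcases lt_trichotomy j1 j2 with h | h | h
      · have := μ.colLen_anti j1 j2 h.le; omega
      · exact h
      · have := μ.colLen_anti j2 j1 h.le; omega
    rw [hjj]

lemma hook_count (μ : YoungDiagram) (d : ℕ) (hd : 0 < d) :
    d * (μ.cells.filter (fun c => d ∣ hookLength μ c)).card ≤ μ.card := by
  calc d * (μ.cells.filter (fun c => d ∣ hookLength μ c)).card
      ≤ d * invd d (bset μ) := Nat.mul_le_mul_left d (cells_filter_le μ d hd)
    _ ≤ invd 1 (bset μ) := invd_le d hd _
    _ = μ.card := invd_one_bset μ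

open Polynomial in
lemma prod_one_sub_X_pow (M : Multiset ℕ) (hM : ∀ m ∈ M, 0 < m) :
    (M.map (fun m => (1 - X ^ m : ℤ[X]))).prod
      = (-1) ^ (Multiset.card M) *
        ((M.bind (fun m => m.divisors.val)).map (fun d => cyclotomic d ℤ)).prod := by
  induction M using Multiset.induction with
  | empty => simp
  | cons a M ih =>
    have ha : 0 < a := hM a (Multiset.mem_cons_self a M)
    have hM' : ∀ m ∈ M, 0 < m := fun m hm => hM m (Multiset.mem_cons_of_mem hm)
    rw [Multiset.map_cons, Multiset.prod_cons, ih hM', Multiset.card_cons,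
      Multiset.cons_bind, Multiset.map_add, Multiset.prod_add]
    have h1 : (1 - X ^ a : ℤ[X]) = -1 * ((a.divisors.val.map (fun d => cyclotomic d ℤ)).prod) := by
      have := prod_cyclotomic_eq_X_pow_sub_one ha ℤ
      rw [← Finset.prod_eq_multiset_prod] at *
      rw [this]
      ring
    rw [h1, pow_succ]
    ring

lemma count_bind_divisors (M : Multiset ℕ) (d : ℕ) :
    Multiset.count d (M.bind (fun m => m.divisors.val))
      = Multiset.card (M.filter (fun m => d ∈ m.divisors)) := by
  induction M using Multiset.induction with
  | empty => simp
  | cons a M ih =>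
    rw [Multiset.cons_bind, Multiset.count_add, ih, Multiset.filter_cons]
    by_cases h : d ∈ a.divisors
    · rw [if_pos h, Multiset.count_eq_one_of_mem a.divisors.nodup h, Multiset.card_add]
      simp
    · rw [if_neg h, Multiset.count_eq_zero_of_notMem h, zero_add]
      simp


end Aux

/-- For a partition `μ` of `n > 0`, the modified Kostka polynomial
`K_μ(q) = ∏_{i=1}^n (1-q^i) / ∏_{u∈μ} (1-q^{h_μ(u)})` is a polynomial with
integer coefficients and constant term `1`. -/
theorem stmt0 (n : ℕ) (hn : 0 < n) (μ : YoungDiagram) (hμ : μ.card = n) :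
    ∃ P : Polynomial ℤ, P.coeff 0 = 1 ∧
      ∏ i ∈ Finset.range n, (1 - Polynomial.X ^ (i + 1)) =
        P * ∏ c ∈ μ.cells, (1 - Polynomial.X ^ hookLength μ c) := by
  classical
  set NM : Multiset ℕ := (Finset.range n).val.map (fun i => i + 1) with hNM
  set HM : Multiset ℕ := μ.cells.val.map (fun c => hookLength μ c) with hHM
  have hNMpos : ∀ m ∈ NM, 0 < m := by
    intro m hm
    rw [hNM, Multiset.mem_map] at hm
    obtain ⟨i, -, rfl⟩ := hm
    omega
  have hHMpos : ∀ m ∈ HM, 0 < m := by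
    intro m hm
    rw [hHM, Multiset.mem_map] at hm
    obtain ⟨c, hc, rfl⟩ := hm
    have hcμ : (c.1, c.2) ∈ μ := by
      rw [Prod.mk.eta]
      exact (YoungDiagram.mem_cells _).mp hc
    exact hook_pos μ hcμ
  have hcardNM : Multiset.card NM = n := by
    rw [hNM, Multiset.card_map]
    exact Finset.card_range n
  have hcardHM : Multiset.card HM = n := by
    rw [hHM, Multiset.card_map]
    exact hμ
  set A := NM.bind (fun m => m.divisors.val) with hA
  set Bm := HM.bind (fun m => m.divisors.val) with hB
  have hle : Bm ≤ A := by
    rw [Multiset.le_iff_count]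
    intro d
    rw [hA, hB, count_bind_divisors, count_bind_divisors]
    rcases Nat.eq_zero_or_pos d with rfl | hd
    · have h1 : ∀ (M : Multiset ℕ), (∀ m ∈ M, 0 < m) →
          M.filter (fun m => 0 ∈ m.divisors) = 0 := by
        intro M hM
        rw [Multiset.filter_eq_nil]
        intro m hm hmem
        rw [Nat.mem_divisors] at hmem
        have := hM m hm
        omega
      rw [h1 HM hHMpos, h1 NM hNMpos]
    · have hAcount : Multiset.card (NM.filter (fun m => d ∈ m.divisors)) = n / d := by
        rw [hNM, Multiset.filter_map, Multiset.card_map]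
        have : Multiset.filter ((fun m => d ∈ m.divisors) ∘ (fun i => i + 1)) (Finset.range n).val
            = Multiset.filter (fun i => d ∣ (i + 1)) (Finset.range n).val := by
          apply Multiset.filter_congr
          intro i _
          simp only [Function.comp_apply, Nat.mem_divisors]
          exact ⟨fun h => h.1, fun h => ⟨h, Nat.succ_ne_zero i⟩⟩
        rw [this, ← Finset.filter_val, ← Finset.card_def, count_range_dvd d n hd]
      have hBcount : d * Multiset.card (HM.filter (fun m => d ∈ m.divisors)) ≤ n := by
        rw [hHM, Multiset.filter_map, Multiset.card_map]
        have heq : Multiset.filter ((fun m => d ∈ m.divisors) ∘ (fun c => hookLength μ c)) μ.cells.val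
            = Multiset.filter (fun c => d ∣ hookLength μ c) μ.cells.val := by
          apply Multiset.filter_congr
          intro c hc
          have hcμ : (c.1, c.2) ∈ μ := by
            rw [Prod.mk.eta]
            exact (YoungDiagram.mem_cells _).mp hc
          have hpos : hookLength μ c ≠ 0 := Nat.pos_iff_ne_zero.mp (hook_pos μ hcμ)
          simp only [Function.comp_apply, Nat.mem_divisors]
          exact ⟨fun h => h.1, fun h => ⟨h, hpos⟩⟩
        rw [heq, ← Finset.filter_val, ← Finset.card_def]
        have := hook_count μ d hd
        rw [hμ] at this
        exact this
      rw [hAcount]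
      exact (Nat.le_div_iff_mul_le hd).mpr (by rw [mul_comm]; exact hBcount)
  set P : Polynomial ℤ := ((A - Bm).map (fun d => Polynomial.cyclotomic d ℤ)).prod with hP
  have hiden : ∏ i ∈ Finset.range n, (1 - (Polynomial.X : Polynomial ℤ) ^ (i + 1)) =
      P * ∏ c ∈ μ.cells, (1 - Polynomial.X ^ hookLength μ c) := by
    have e1 : ∏ i ∈ Finset.range n, (1 - (Polynomial.X : Polynomial ℤ) ^ (i + 1))
        = (NM.map (fun m => (1 - Polynomial.X ^ m : Polynomial ℤ))).prod := by
      rw [hNM, Multiset.map_map, Finset.prod_eq_multiset_prod]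
      rfl
    have e2 : ∏ c ∈ μ.cells, (1 - (Polynomial.X : Polynomial ℤ) ^ hookLength μ c)
        = (HM.map (fun m => (1 - Polynomial.X ^ m : Polynomial ℤ))).prod := by
      rw [hHM, Multiset.map_map, Finset.prod_eq_multiset_prod]
      rfl
    rw [e1, e2, prod_one_sub_X_pow NM hNMpos, prod_one_sub_X_pow HM hHMpos,
      hcardNM, hcardHM]
    have e3 : (A.map (fun d => Polynomial.cyclotomic d ℤ)).prod
        = P * ((Bm).map (fun d => Polynomial.cyclotomic d ℤ)).prod := by
      conv_lhs => rw [← tsub_add_cancel_of_le hle]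
      rw [Multiset.map_add, Multiset.prod_add, hP]
    rw [← hA, ← hB, e3]
    ring
  refine ⟨P, ?_, hiden⟩
  have h2 : Polynomial.eval 0 (∏ c ∈ μ.cells, (1 - (Polynomial.X : Polynomial ℤ) ^ hookLength μ c)) = 1 := by
    rw [Polynomial.eval_prod]
    apply Finset.prod_eq_one
    intro c hc
    have hcμ : (c.1, c.2) ∈ μ := by rw [Prod.mk.eta]; exact (YoungDiagram.mem_cells _).mp hc
    have hpos : hookLength μ c ≠ 0 := Nat.pos_iff_ne_zero.mp (hook_pos μ hcμ)
    rw [Polynomial.eval_sub, Polynomial.eval_one, Polynomial.eval_pow, Polynomial.eval_X,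
      zero_pow hpos, sub_zero]
  have h1 : Polynomial.eval 0 (∏ i ∈ Finset.range n, (1 - (Polynomial.X : Polynomial ℤ) ^ (i + 1))) = 1 := by
    rw [Polynomial.eval_prod]
    apply Finset.prod_eq_one
    intro i _
    rw [Polynomial.eval_sub, Polynomial.eval_one, Polynomial.eval_pow, Polynomial.eval_X,
      zero_pow (Nat.succ_ne_zero i), sub_zero]
  have hfin := congrArg (Polynomial.eval 0) hiden
  rw [h1, Polynomial.eval_mul, h2, mul_one] at hfin
  rw [Polynomial.coeff_zero_eq_eval_zero, ← hfin]
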